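/- arXiv:1110.3128 — 2 statements merged into one kernel-verified Lean document; each statement's English description precedes it below -/
import Mathlib

section
/- If $D$ is a simplicial 2-ball, $W$ a set of boundary vertices of $D$ such that every edge of $D$ joining two vertices of $W$ lies in $\partial D$, and $I$ is the maximal subcomplex of $D$ on the vertex set $V \setminus W$ (where $V$ is the vertex set of $D$), and $I$ is connected, then the closed star neighbourhood $\mathrm{Star}_D I$ equals $D$. -/
namespace SCPaper

/-- An abstract simplicial complex on vertex type `V`. -/
structure SComplex (V : Type) where
  faces : Set (Finset V)
  nonempty_mem : ∀ s ∈ faces, s.Nonempty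
  down_closed : ∀ s ∈ faces, ∀ t ⊆ s, t.Nonempty → t ∈ faces

variable {V : Type} [DecidableEq V]

/-- The geometric realization of a simplicial complex, as a subspace of `V → ℝ`. -/
def geomRealization (K : SComplex V) : Set (V → ℝ) :=
  {f | ∃ s ∈ K.faces, (∀ v, 0 ≤ f v) ∧ (∀ v ∉ s, f v = 0) ∧ s.sum f = 1}

/-- `K` is a simplicial `d`-ball: its realization is homeomorphic to a closed `d`-ball. -/
def IsBall (d : ℕ) (K : SComplex V) : Prop :=
  Nonempty ((geomRealization K) ≃ₜ (Metric.closedBall (0 : EuclideanSpace ℝ (Fin d)) 1))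

/-- The vertex set of a complex. -/
def vertexSet (K : SComplex V) : Set V := {v | {v} ∈ K.faces}

/-- The facets (maximal faces) of a complex. -/
def facets (K : SComplex V) : Set (Finset V) :=
  {s | s ∈ K.faces ∧ ∀ t ∈ K.faces, s ⊆ t → s = t}

/-- A complex is pure of dimension `d`. -/
def IsPure (d : ℕ) (K : SComplex V) : Prop :=
  (∀ s ∈ K.faces, s.card ≤ d + 1) ∧ ∀ s ∈ K.faces, ∃ t ∈ K.faces, s ⊆ t ∧ t.card = d + 1

/-- A complex has dimension `n`. -/
def HasDim (n : ℕ) (K : SComplex V) : Prop :=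
  (∀ s ∈ K.faces, s.card ≤ n + 1) ∧ ∃ s ∈ K.faces, s.card = n + 1

/-- The full simplex on a vertex set `s`. -/
def simplexOn (s : Finset V) : SComplex V where
  faces := {t | t ⊆ s ∧ t.Nonempty}
  nonempty_mem := fun t ht => ht.2
  down_closed := fun a ha t ht hne => ⟨ht.trans ha.1, hne⟩

/-- Intersection of two complexes. -/
def interC (K L : SComplex V) : SComplex V where
  faces := K.faces ∩ L.faces
  nonempty_mem := fun s hs => K.nonempty_mem s hs.1
  down_closed := fun s hs t ht hne =>
    ⟨K.down_closed s hs.1 t ht hne, L.down_closed s hs.2 t ht hne⟩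

/-- The boundary complex of a pure `d`-dimensional ball-like complex: it is generated by the
`(d-1)`-dimensional faces (of cardinality `d`) contained in exactly one facet. -/
def boundaryC (d : ℕ) (K : SComplex V) : SComplex V where
  faces := {t | t.Nonempty ∧ ∃ s ∈ K.faces, t ⊆ s ∧ s.card = d ∧ ∃! F, F ∈ facets K ∧ s ⊆ F}
  nonempty_mem := fun s hs => hs.1
  down_closed := by
    rintro s ⟨-, u, hu, hsu, hcard, hF⟩ t ht hne
    exact ⟨hne, u, hu, ht.trans hsu, hcard, hF⟩

/-- The closed star `Star_K I`: all faces of `K` contained in a face meeting a vertex of `I`. -/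
def starC (K I : SComplex V) : SComplex V where
  faces := {t | t ∈ K.faces ∧ ∃ s ∈ K.faces, t ⊆ s ∧ ∃ v ∈ s, {v} ∈ I.faces}
  nonempty_mem := fun s hs => K.nonempty_mem s hs.1
  down_closed := by
    rintro s ⟨hsK, u, hu, hsu, hv⟩ t ht hne
    exact ⟨K.down_closed s hsK t ht hne, u, hu, ht.trans hsu, hv⟩

/-- The maximal (full) subcomplex of `K` on a vertex set `S`. -/
def fullSub (K : SComplex V) (S : Set V) : SComplex V where
  faces := {t | t ∈ K.faces ∧ ∀ v ∈ t, v ∈ S}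
  nonempty_mem := fun s hs => K.nonempty_mem s hs.1
  down_closed := fun s hs t ht hne =>
    ⟨K.down_closed s hs.1 t ht hne, fun v hv => hs.2 v (ht hv)⟩

/-- The closure of the complement of a subcomplex `L` in `K`: the subcomplex generated by
the faces of `K` not in `L`. -/
def compClosure (K L : SComplex V) : SComplex V where
  faces := {t | t.Nonempty ∧ ∃ s ∈ K.faces, s ∉ L.faces ∧ t ⊆ s}
  nonempty_mem := fun s hs => hs.1
  down_closed := by
    rintro s ⟨-, u, hu, huL, hsu⟩ t ht hne
    exact ⟨hne, u, hu, huL, ht.trans hsu⟩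

/-- Two vertices are connected by an edge path in `K`. -/
def Reach (K : SComplex V) : V → V → Prop :=
  Relation.ReflTransGen (fun a b => ({a, b} : Finset V) ∈ K.faces)

/-- A complex is connected (as a 1-skeleton graph, nonempty). -/
def IsConnectedC (K : SComplex V) : Prop :=
  (∃ v, v ∈ vertexSet K) ∧ ∀ u v, u ∈ vertexSet K → v ∈ vertexSet K → Reach K u v

/-- The connected component of the vertex `v` in `K`. -/
def componentOf (K : SComplex V) (v : V) : SComplex V where
  faces := {t | t ∈ K.faces ∧ ∀ u ∈ t, Reach K v u}
  nonempty_mem := fun s hs => K.nonempty_mem s hs.1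
  down_closed := fun s hs t ht hne =>
    ⟨K.down_closed s hs.1 t ht hne, fun u hu => hs.2 u (ht hu)⟩

/-- `C` is a connected component of `K`. -/
def IsComponentOf (K C : SComplex V) : Prop :=
  ∃ v, {v} ∈ K.faces ∧ C = componentOf K v

/-- An interior vertex of a `3`-ball `B`: a vertex not on the boundary. -/
def IsInteriorVertex (B : SComplex V) (v : V) : Prop :=
  {v} ∈ B.faces ∧ {v} ∉ (boundaryC 3 B).faces

/-- The interior graph of a `3`-ball: interior vertices and interior edges. -/
def interiorGraph (B : SComplex V) : SComplex V where
  faces := {t | t ∈ B.faces ∧ t.card ≤ 2 ∧ ∀ v ∈ t, IsInteriorVertex B v}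
  nonempty_mem := fun s hs => B.nonempty_mem s hs.1
  down_closed := fun s hs t ht hne =>
    ⟨B.down_closed s hs.1 t ht hne, le_trans (Finset.card_le_card ht) hs.2.1,
      fun v hv => hs.2.2 v (ht hv)⟩

/-- A maximal interior graph component of a `3`-ball. -/
def IsMaxIntComp (B I : SComplex V) : Prop :=
  IsComponentOf (interiorGraph B) I

/-- A spanning edge of a `3`-ball: an edge not on the boundary with both endpoints on it. -/
def IsSpanningEdge (B : SComplex V) (e : Finset V) : Prop :=
  e ∈ B.faces ∧ e.card = 2 ∧ e ∉ (boundaryC 3 B).faces ∧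
    ∀ v ∈ e, {v} ∈ (boundaryC 3 B).faces

/-- A spanning edge `e` is strict if there is no maximal interior graph component `I` such that
both endpoints of `e` lie in exactly one connected component of `∂B ∩ Star_B I`. -/
def IsStrictSpanningEdge (B : SComplex V) (e : Finset V) : Prop :=
  IsSpanningEdge B e ∧
    ¬ ∃ I, IsMaxIntComp B I ∧
      ∃! C, IsComponentOf (interC (boundaryC 3 B) (starC B I)) C ∧ ∀ v ∈ e, {v} ∈ C.faces

/-- A `3`-ball is reduced: every interior `2`-face has at most one boundary edge. -/
def IsReduced (B : SComplex V) : Prop :=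
  ∀ s ∈ B.faces, s.card = 3 → s ∉ (boundaryC 3 B).faces →
    ({e : Finset V | e ⊆ s ∧ e.card = 2 ∧ e ∈ (boundaryC 3 B).faces}).Subsingleton

/-- Constructibility of pure `d`-dimensional simplicial complexes. -/
inductive Constructible : ℕ → SComplex V → Prop
  | simplex (d : ℕ) (K : SComplex V) (s : Finset V) (hcard : s.card = d + 1)
      (hK : K.faces = {t | t ⊆ s ∧ t.Nonempty}) : Constructible d K
  | union (d : ℕ) (K C₁ C₂ : SComplex V)
      (h₁ : C₁.faces ⊆ K.faces) (h₂ : C₂.faces ⊆ K.faces)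
      (hp₁ : IsPure d C₁) (hp₂ : IsPure d C₂)
      (hu : K.faces = C₁.faces ∪ C₂.faces)
      (hdim : HasDim (d - 1) (interC C₁ C₂))
      (hc₁ : Constructible d C₁) (hc₂ : Constructible d C₂)
      (hci : Constructible (d - 1) (interC C₁ C₂)) : Constructible d K

/-- Shellability of a pure `d`-dimensional complex. -/
def Shellable (d : ℕ) (K : SComplex V) : Prop :=
  ∃ (t : ℕ) (F : Fin t → Finset V),
    0 < t ∧ Function.Injective F ∧
    (∀ i, F i ∈ K.faces ∧ (F i).card = d + 1) ∧
    (∀ s, s ∈ K.faces ↔ s.Nonempty ∧ ∃ i, s ⊆ F i) ∧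
    ∀ k : Fin t, 0 < (k : ℕ) →
      (∃ s : Finset V, s.Nonempty ∧ s ⊆ F k ∧ ∃ j, j < k ∧ s ⊆ F j) ∧
      ∀ s : Finset V, (s.Nonempty ∧ s ⊆ F k ∧ ∃ j, j < k ∧ s ⊆ F j) →
        ∃ u : Finset V, s ⊆ u ∧ u.card = d ∧ u ⊆ F k ∧ ∃ j, j < k ∧ u ⊆ F j

/-- A witness for a construction (deconstruction) of a constructible complex. -/
inductive ConstructionOf (d : ℕ) : SComplex V → Type
  | simplex (K : SComplex V) (s : Finset V) (hcard : s.card = d + 1)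
      (hK : K.faces = {t | t ⊆ s ∧ t.Nonempty}) : ConstructionOf d K
  | union (K C₁ C₂ : SComplex V)
      (h₁ : C₁.faces ⊆ K.faces) (h₂ : C₂.faces ⊆ K.faces)
      (hp₁ : IsPure d C₁) (hp₂ : IsPure d C₂)
      (hu : K.faces = C₁.faces ∪ C₂.faces)
      (hdim : HasDim (d - 1) (interC C₁ C₂))
      (hci : Constructible (d - 1) (interC C₁ C₂))
      (t₁ : ConstructionOf d C₁) (t₂ : ConstructionOf d C₂) : ConstructionOf d K

/-- The decomposition steps `(B', B'₁, B'₂)` occurring in a construction. -/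
def ConstructionOf.nodes {d : ℕ} :
    {K : SComplex V} → ConstructionOf d K → Set (SComplex V × SComplex V × SComplex V)
  | _, .simplex _ _ _ _ => ∅
  | _, .union K C₁ C₂ _ _ _ _ _ _ _ t₁ t₂ => insert (K, C₁, C₂) (t₁.nodes ∪ t₂.nodes)


open Set Metric MeasureTheory

private lemma line_ne_top (a b : EuclideanSpace ℝ (Fin 2)) :
    affineSpan ℝ ({a, b} : Set (EuclideanSpace ℝ (Fin 2))) ≠ ⊤ := by
  intro h
  have hd : vectorSpan ℝ ({a, b} : Set (EuclideanSpace ℝ (Fin 2))) = ⊤ := by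
    rw [← direction_affineSpan, h, AffineSubspace.direction_top]
  rw [vectorSpan_pair] at hd
  have h2 : Module.finrank ℝ (EuclideanSpace ℝ (Fin 2)) ≤ 1 := by
    rw [← finrank_top, ← hd]
    rcases eq_or_ne (a -ᵥ b) 0 with h0 | h0
    · rw [show (a -ᵥ b) = 0 from h0, Submodule.span_zero_singleton]; simp
    · exact le_of_eq (finrank_span_singleton h0)
  rw [finrank_euclideanSpace_fin] at h2
  omega

private lemma seg_avoid {E : Type*} [NormedAddCommGroup E] [NormedSpace ℝ E]
    {x z q : E} (hq : q ∈ segment ℝ x z) (hqx : q ≠ x) :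
    z ∈ affineSpan ℝ ({x, q} : Set E) := by
  obtain ⟨a, b, _, _, hab, h⟩ := hq
  have hb0 : b ≠ 0 := by
    rintro rfl
    exact hqx (by rw [← h]; simp [show a = 1 by linarith])
  have hxy : b⁻¹ • (q - x) = z - x := by
    have hqx' : q - x = b • (z - x) := by
      rw [← h, show a = 1 - b by linarith]; module
    rw [hqx', smul_smul, inv_mul_cancel₀ hb0, one_smul]
  have hx : x ∈ affineSpan ℝ ({x, q} : Set E) := subset_affineSpan _ _ (by simp)
  have hq' : q ∈ affineSpan ℝ ({x, q} : Set E) := subset_affineSpan _ _ (by simp)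
  have hm := AffineSubspace.smul_vsub_vadd_mem (affineSpan ℝ ({x, q} : Set E)) b⁻¹ hq' hx hx
  have : z = b⁻¹ • (q -ᵥ x) +ᵥ x := by
    rw [vsub_eq_sub, hxy]; simp
  rw [this]; exact hm

private lemma ball_diff_preconn (Q : Set (EuclideanSpace ℝ (Fin 2))) (hQ : Q.Finite) :
    IsPreconnected (Metric.closedBall (0 : EuclideanSpace ℝ (Fin 2)) 1 \ Q) := by
  set K := Metric.closedBall (0 : EuclideanSpace ℝ (Fin 2)) 1 with hK
  have key : ∀ x ∈ K \ Q, ∀ y ∈ K \ Q, JoinedIn (K \ Q) x y := by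
    intro x hx y hy
    set bad : Set (EuclideanSpace ℝ (Fin 2)) :=
      (⋃ q ∈ Q, (affineSpan ℝ ({x, q} : Set (EuclideanSpace ℝ (Fin 2))) : Set (EuclideanSpace ℝ (Fin 2)))) ∪
      ⋃ q ∈ Q, (affineSpan ℝ ({y, q} : Set (EuclideanSpace ℝ (Fin 2))) : Set (EuclideanSpace ℝ (Fin 2))) with hbaddef
    have hbad : volume bad = 0 := by
      refine measure_union_null ?_ ?_ <;>
        exact (measure_biUnion_null_iff hQ.countable).2 fun q _ =>
          Measure.addHaar_affineSubspace volume _ (line_ne_top _ _)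
    have hball : ¬ (Metric.ball (0 : EuclideanSpace ℝ (Fin 2)) 1 ⊆ bad) := by
      intro hsub
      have h1 : volume (Metric.ball (0 : EuclideanSpace ℝ (Fin 2)) 1) ≤ volume bad :=
        measure_mono hsub
      rw [hbad] at h1
      exact (measure_ball_pos volume (0 : EuclideanSpace ℝ (Fin 2)) one_pos).ne'
        (le_antisymm h1 zero_le)
    obtain ⟨z, hzball, hzbad⟩ := Set.not_subset.1 hball
    have hzK : z ∈ K := Metric.ball_subset_closedBall hzball
    have seg : ∀ w : EuclideanSpace ℝ (Fin 2), w ∈ K \ Q →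
        (z ∈ ⋃ q ∈ Q, (affineSpan ℝ ({w, q} : Set (EuclideanSpace ℝ (Fin 2))) : Set (EuclideanSpace ℝ (Fin 2)))
          → False) →
        segment ℝ w z ⊆ K \ Q := by
      intro w hw hside p hp
      refine ⟨(convex_closedBall _ _).segment_subset hw.1 hzK hp, fun hpQ => ?_⟩
      rcases eq_or_ne p w with rfl | hpw
      · exact hw.2 hpQ
      · exact hside (Set.mem_biUnion hpQ (seg_avoid hp hpw))
    have seg1 := seg x hx (fun h => hzbad (Or.inl h))
    have seg2 := seg y hy (fun h => hzbad (Or.inr h))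
    have j1 : JoinedIn (K \ Q) x z :=
      (((convex_segment x z).isPathConnected ⟨x, left_mem_segment ℝ x z⟩).joinedIn
        x (left_mem_segment ℝ x z) z (right_mem_segment ℝ x z)).mono seg1
    have j2 : JoinedIn (K \ Q) y z :=
      (((convex_segment y z).isPathConnected ⟨y, left_mem_segment ℝ y z⟩).joinedIn
        y (left_mem_segment ℝ y z) z (right_mem_segment ℝ y z)).mono seg2
    exact j1.trans j2.symm
  rcases Set.eq_empty_or_nonempty (K \ Q) with h | ⟨x, hx⟩
  · rw [h]; exact isPreconnected_empty
  · exact (IsPathConnected.isConnected ⟨x, hx, fun {y} hy => key x hx y hy⟩).isPreconnected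

private def indic [DecidableEq V] (v : V) : V → ℝ := fun u => if u = v then 1 else 0

private lemma realization_diff_preconn (D : SComplex V) (hD : IsBall 2 D)
    (P : Set (V → ℝ)) (hP : P.Finite) : IsPreconnected (geomRealization D \ P) := by
  obtain ⟨e⟩ := hD
  set X := geomRealization D with hX
  set S : Set X := Subtype.val ⁻¹' P ᶜ with hS
  have h0 : (e '' S : Set (Metric.closedBall (0 : EuclideanSpace ℝ (Fin 2)) 1))
      = (e '' (Subtype.val ⁻¹' P))ᶜ := by
    rw [hS, Set.preimage_compl, ← Set.image_compl_eq e.bijective]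
  have h1 : (Subtype.val '' (e '' S) : Set (EuclideanSpace ℝ (Fin 2)))
      = Metric.closedBall (0 : EuclideanSpace ℝ (Fin 2)) 1 \
        (Subtype.val '' (e '' (Subtype.val ⁻¹' P))) := by
    rw [h0]
    ext p
    constructor
    · rintro ⟨x, hx, rfl⟩
      exact ⟨x.2, fun ⟨y, hy, hyp⟩ => hx (by rwa [show y = x from Subtype.ext hyp] at hy)⟩
    · rintro ⟨hpK, hp⟩
      exact ⟨⟨p, hpK⟩, fun h => hp ⟨⟨p, hpK⟩, h, rfl⟩, rfl⟩
  have hQfin : (Subtype.val '' (e '' (Subtype.val ⁻¹' P)) : Set (EuclideanSpace ℝ (Fin 2))).Finite :=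
    (((hP.preimage Subtype.val_injective.injOn).image e).image Subtype.val)
  have h2 : IsPreconnected (Subtype.val '' (e '' S) : Set (EuclideanSpace ℝ (Fin 2))) := by
    rw [h1]; exact ball_diff_preconn _ hQfin
  have h3 : IsPreconnected (e '' S) := Topology.IsInducing.subtypeVal.isPreconnected_image.mp h2
  have h4 : IsPreconnected S := by
    have h := h3.image e.symm e.symm.continuous.continuousOn
    rwa [show e.symm '' (e '' S) = S by simp [Set.image_image]] at h
  have h5 := h4.image Subtype.val continuous_subtype_val.continuousOn
  rwa [show (Subtype.val '' S : Set (V → ℝ)) = X \ P by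
    rw [hS, Subtype.image_preimage_coe, Set.diff_eq]] at h5

/-- Lemma 2.1: if `W` consists of boundary vertices, every edge joining two vertices of `W`
lies in `∂D`, and the maximal subcomplex `I` on `V \ W` is connected, then `Star_D I = D`. -/
theorem star_eq_of_connected (D : SComplex V) (hD : IsBall 2 D) (W : Set V)
    (hW : ∀ w ∈ W, {w} ∈ (boundaryC 2 D).faces)
    (hedge : ∀ e ∈ D.faces, e.card = 2 → (∀ v ∈ e, v ∈ W) → e ∈ (boundaryC 2 D).faces)
    (I : SComplex V) (hI : I = fullSub D (vertexSet D \ W))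
    (hconn : IsConnectedC I) :
    (starC D I).faces = D.faces := by
  classical
  set X := geomRealization D with hX
  -- basic facts from compactness
  have hXcl : IsClosed X := by
    obtain ⟨e⟩ := hD
    have hc : CompactSpace (Metric.closedBall (0 : EuclideanSpace ℝ (Fin 2)) 1) :=
      isCompact_iff_compactSpace.mp (isCompact_closedBall _ _)
    have : CompactSpace X := e.symm.compactSpace
    exact (isCompact_iff_compactSpace.mpr this).isClosed
  have indic_mem : ∀ v : V, {v} ∈ D.faces → indic v ∈ X := by
    intro v hv
    refine ⟨{v}, hv, fun u => ?_, fun u hu => ?_, ?_⟩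
    · unfold indic; split <;> norm_num
    · unfold indic; rw [if_neg (by simpa using hu)]
    · simp [indic]
  have hVfin : (vertexSet D).Finite := by
    by_contra hinf
    have hinf : (vertexSet D).Infinite := hinf
    set F' := Set.Infinite.natEmbedding _ hinf with hF'
    have hmem : ∀ n : ℕ, indic ((F' n : V)) ∈ X := fun n => indic_mem _ (F' n).2
    have hten : Filter.Tendsto (fun n => indic ((F' n : V))) Filter.atTop (nhds 0) := by
      rw [tendsto_pi_nhds]
      intro u
      have hev : ∀ᶠ n in Filter.atTop, indic ((F' n : V)) u = 0 := by
        rw [← Nat.cofinite_eq_atTop]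
        have hfin : {n : ℕ | (F' n : V) = u}.Finite := by
          apply Set.Subsingleton.finite
          intro a ha b hb
          exact F'.injective (Subtype.ext (ha.trans hb.symm))
        filter_upwards [Set.Finite.eventually_cofinite_notMem hfin] with n hn
        unfold indic
        exact if_neg (fun h => hn (h.symm : (F' n : V) = u))
      exact Filter.Tendsto.congr' (hev.mono fun n h => h.symm) tendsto_const_nhds
    have h0 : (0 : V → ℝ) ∈ X := hXcl.mem_of_tendsto hten (Filter.Eventually.of_forall hmem)
    obtain ⟨s, _, -, -, hsum⟩ := h0
    simp at hsum
  set V₀ : Finset V := hVfin.toFinset with hV₀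
  have hface_sub : ∀ s ∈ D.faces, s ⊆ V₀ := by
    intro s hs v hv
    exact hVfin.mem_toFinset.mpr
      (D.down_closed s hs {v} (Finset.singleton_subset_iff.mpr hv) (Finset.singleton_nonempty v))
  have hfacet : ∀ t ∈ D.faces, ∃ F, F ∈ facets D ∧ t ⊆ F := by
    intro t ht
    have hfin : {s | s ∈ D.faces ∧ t ⊆ s}.Finite :=
      Set.Finite.subset V₀.powerset.finite_toSet
        (fun s hs => Finset.mem_coe.mpr (Finset.mem_powerset.mpr (hface_sub s hs.1)))
    obtain ⟨F, hF, hmax⟩ := Set.Finite.exists_maximalFor id _ hfin ⟨t, ht, subset_rfl⟩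
    exact ⟨F, ⟨hF.1, fun u hu hFu => Finset.Subset.antisymm hFu (hmax ⟨hu, hF.2.trans hFu⟩ hFu)⟩, hF.2⟩
  have hfacets_fin : (facets D).Finite :=
    Set.Finite.subset V₀.powerset.finite_toSet
      (fun s hs => Finset.mem_coe.mpr (Finset.mem_powerset.mpr (hface_sub s hs.1)))
  have hbary : ∀ s : Finset V, s ∈ D.faces →
      (fun u => if u ∈ s then ((s.card : ℝ))⁻¹ else 0) ∈ X := by
    intro s hs
    refine ⟨s, hs, fun v => ?_, fun v hv => if_neg hv, ?_⟩
    · dsimp only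
      split <;> positivity
    · rw [Finset.sum_congr rfl (fun v hv => if_pos hv), Finset.sum_const, nsmul_eq_mul,
        mul_inv_cancel₀]
      exact Nat.cast_ne_zero.mpr (Finset.card_ne_zero.mpr (D.nonempty_mem s hs))
  ext t
  constructor
  · rintro ⟨h, -⟩; exact h
  · intro ht
    obtain ⟨F, hF, htF⟩ := hfacet t ht
    by_cases hFW : ∀ v ∈ F, v ∈ W
    case neg =>
      push_neg at hFW
      obtain ⟨v, hvF, hvW⟩ := hFW
      have hvface : {v} ∈ D.faces :=
        D.down_closed F hF.1 {v} (Finset.singleton_subset_iff.mpr hvF) (Finset.singleton_nonempty v)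
      refine ⟨ht, F, hF.1, htF, v, hvF, ?_⟩
      rw [hI]
      exact ⟨hvface, fun u hu => by
        rw [Finset.mem_singleton] at hu
        subst hu
        exact ⟨hvface, hvW⟩⟩
    case pos =>
      exfalso
      by_cases hG : ∃ G, G ∈ facets D ∧ G ≠ F
      case neg =>
        push_neg at hG
        obtain ⟨v, hv⟩ := hconn.1
        have hv : {v} ∈ I.faces := hv
        rw [hI] at hv
        obtain ⟨hvD, hvW⟩ := hv
        have hvW' := (hvW v (Finset.mem_singleton_self v)).2
        obtain ⟨Fv, hFv, hvFv⟩ := hfacet {v} hvD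
        exact hvW' (hFW v ((hG Fv hFv) ▸ hvFv (Finset.mem_singleton_self v)))
      case pos =>
        obtain ⟨G, hGfacet, hGF⟩ := hG
        -- the two closed pieces
        set ZF : Set (V → ℝ) := {f | ∀ v, v ∉ F → f v = 0} with hZF
        set Z : Set (V → ℝ) :=
          ⋃ G' ∈ {G' | G' ∈ facets D ∧ G' ≠ F}, {f : V → ℝ | ∀ v, v ∉ G' → f v = 0} with hZ
        have hvan_closed : ∀ s : Finset V, IsClosed {f : V → ℝ | ∀ v, v ∉ s → f v = 0} := by
          intro s
          have : {f : V → ℝ | ∀ v, v ∉ s → f v = 0}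
              = ⋂ v ∈ {v : V | v ∉ s}, (fun f : V → ℝ => f v) ⁻¹' {0} := by
            ext f; simp
          rw [this]
          exact isClosed_biInter fun v _ => IsClosed.preimage (continuous_apply v) isClosed_singleton
        have hZFcl : IsClosed ZF := hvan_closed F
        have hZcl : IsClosed Z := by
          rw [hZ]
          exact Set.Finite.isClosed_biUnion
            (hfacets_fin.subset (fun G' hG' => hG'.1)) (fun G' _ => hvan_closed G')
        -- the finite cut set
        set P : Set (V → ℝ) := {f | (∃ v ∈ F, f = indic v) ∧ f ∈ Z} with hP
        have hPfin : P.Finite := by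
          apply Set.Finite.subset ((F : Set V).toFinite.image indic)
          rintro f ⟨⟨v, hv, rfl⟩, -⟩
          exact ⟨v, hv, rfl⟩
        -- two facets meeting W intersect in at most one vertex
        have hinter : ∀ G', G' ∈ facets D → G' ≠ F →
            ∀ u v : V, u ∈ F → u ∈ G' → v ∈ F → v ∈ G' → u = v := by
          intro G' hG' hne u v huF huG hvF hvG
          by_contra huv
          have hsubF : ({u, v} : Finset V) ⊆ F := by
            intro x hx
            rcases Finset.mem_insert.1 hx with rfl | hx
            · exact huF
            · rw [Finset.mem_singleton] at hx; subst hx; exact hvF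
          have hsubG : ({u, v} : Finset V) ⊆ G' := by
            intro x hx
            rcases Finset.mem_insert.1 hx with rfl | hx
            · exact huG
            · rw [Finset.mem_singleton] at hx; subst hx; exact hvG
          have hedgeF : ({u, v} : Finset V) ∈ D.faces :=
            D.down_closed F hF.1 _ hsubF ⟨u, by simp⟩
          have hcard : ({u, v} : Finset V).card = 2 := Finset.card_pair huv
          have hb := hedge _ hedgeF hcard (fun x hx => hFW x (hsubF hx))
          obtain ⟨-, s, hs, hsub, hscard, F', ⟨hF'fac, hsF'⟩, hF'uniq⟩ := hb
          have hse : ({u, v} : Finset V) = s :=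
            Finset.eq_of_subset_of_card_le hsub (le_of_eq (hscard.trans hcard.symm))
          have h1 : F = F' := hF'uniq F ⟨hF, hse ▸ hsubF⟩
          have h2 : G' = F' := hF'uniq G' ⟨hG', hse ▸ hsubG⟩
          exact hne (h2.trans h1.symm)
        -- disconnection argument
        have hpre := realization_diff_preconn D hD P hPfin
        rw [isPreconnected_closed_iff] at hpre
        have hcover : X \ P ⊆ ZF ∪ Z := by
          rintro f ⟨hfX, -⟩
          obtain ⟨s, hs, hnn, hzero, hsum⟩ := hfX
          obtain ⟨F', hF', hsF'⟩ := hfacet s hs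
          by_cases hFF : F' = F
          · exact Or.inl (fun v hv => hzero v (fun hvs => hv (hFF ▸ hsF' hvs)))
          · exact Or.inr (Set.mem_biUnion (⟨hF', hFF⟩ : F' ∈ {G' | G' ∈ facets D ∧ G' ≠ F})
              (fun v hv => hzero v fun hvs => hv (hsF' hvs)))
        have hA : ((X \ P) ∩ ZF).Nonempty := by
          obtain h1 | h2 := Nat.lt_or_ge F.card 2
          · -- F = {w}
            have hc1 : F.card = 1 := le_antisymm (Nat.lt_succ_iff.mp h1)
              (Finset.card_pos.mpr (D.nonempty_mem F hF.1))
            obtain ⟨w, hwF⟩ := Finset.card_eq_one.mp hc1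
            refine ⟨indic w, ⟨⟨indic_mem w (hwF ▸ hF.1), ?_⟩, fun v hv => ?_⟩⟩
            · rintro ⟨-, hZw⟩
              rw [hZ] at hZw
              rw [Set.mem_iUnion₂] at hZw
              obtain ⟨G', hG'mem, hvan⟩ := hZw
              have hwG' : w ∈ G' := by
                by_contra hw
                have := hvan w hw
                simp [indic] at this
              exact hG'mem.2 (hF.2 G' hG'mem.1.1
                (hwF ▸ Finset.singleton_subset_iff.mpr hwG')).symm
            · exact if_neg (fun h => hv (by rw [h, hwF]; exact Finset.mem_singleton_self w))
          · refine ⟨fun u => if u ∈ F then ((F.card : ℝ))⁻¹ else 0,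
              ⟨⟨hbary F hF.1, ?_⟩, fun v hv => if_neg hv⟩⟩
            rintro ⟨⟨v, hvF, heq⟩, -⟩
            have hc := congrFun heq v
            rw [if_pos hvF] at hc
            simp only [indic, if_pos rfl, if_true, eq_self_iff_true] at hc
            rw [inv_eq_one] at hc
            have : F.card = 1 := by exact_mod_cast hc
            omega
        have hB : ((X \ P) ∩ Z).Nonempty := by
          refine ⟨fun u => if u ∈ G then ((G.card : ℝ))⁻¹ else 0,
            ⟨⟨hbary G hGfacet.1, ?_⟩, Set.mem_biUnion
              (⟨hGfacet, hGF⟩ : G ∈ {G' | G' ∈ facets D ∧ G' ≠ F})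
              (fun v hv => if_neg hv)⟩⟩
          rintro ⟨⟨v, hvF, heq⟩, -⟩
          have hc := congrFun heq v
          simp only [indic, if_pos rfl, if_true, eq_self_iff_true] at hc
          by_cases hvG : v ∈ G
          · rw [if_pos hvG, inv_eq_one] at hc
            have hc1 : G.card = 1 := by exact_mod_cast hc
            have hGv : G = {v} := Finset.eq_singleton_iff_unique_mem.mpr
              ⟨hvG, fun u hu => Finset.card_le_one.mp (le_of_eq hc1) u hu v hvG⟩
            exact hGF (hGfacet.2 F hF.1 (hGv ▸ Finset.singleton_subset_iff.mpr hvF))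
          · rw [if_neg hvG] at hc
            norm_num at hc
        obtain ⟨p, ⟨hpX, hpP⟩, hpZF, hpZ⟩ := hpre ZF Z hZFcl hZcl hcover hA hB
        obtain ⟨s, hs, hnn, hzero, hsum⟩ := hpX
        have hZmem := hpZ
        rw [hZ, Set.mem_iUnion₂] at hZmem
        obtain ⟨G', hG'mem, hpG'⟩ := hZmem
        have hex : ∃ v ∈ s, p v ≠ 0 := by
          by_contra h
          push_neg at h
          rw [Finset.sum_congr rfl h] at hsum
          simp at hsum
        obtain ⟨v, hvs, hv0⟩ := hex
        have hvF : v ∈ F := by by_contra h; exact hv0 (hpZF v h)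
        have hvG' : v ∈ G' := by by_contra h; exact hv0 (hpG' v h)
        have hpv : ∀ u, u ≠ v → p u = 0 := by
          intro u hu
          by_contra h0
          have huF : u ∈ F := by by_contra h; exact h0 (hpZF u h)
          have huG : u ∈ G' := by by_contra h; exact h0 (hpG' u h)
          exact hu (hinter G' hG'mem.1 hG'mem.2 u v huF huG hvF hvG')
        have hpv1 : p v = 1 := by
          rw [← hsum]
          exact (Finset.sum_eq_single v (fun u _ hne => hpv u hne)
            (fun hvs' => absurd hvs hvs')).symm
        refine hpP ⟨⟨v, hvF, funext fun u => ?_⟩, hpZ⟩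
        rcases eq_or_ne u v with rfl | h
        · simp [indic, hpv1]
        · simp [indic, h, hpv u h]

end SCPaper
end

section
/- If $D$ is a simplicial 2-ball with vertex set $V$, $W \subseteq V$ is a set of vertices all lying on $\partial D$, and the maximal subcomplex $I$ of $D$ on vertex set $V \setminus W$ has more than one connected component, then there exists an edge of $D$ not contained in $\partial D$ whose two endpoints both lie in $W$. -/
namespace SCPaper

variable {V : Type} [DecidableEq V]

section Geo
open Metric Set
abbrev EE := EuclideanSpace ℝ (Fin 2)

theorem rank_euclid_two : 1 < Module.rank ℝ EE := by
  rw [← Module.finrank_eq_rank, finrank_euclideanSpace_fin]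
  exact_mod_cast one_lt_two

theorem preconn_ball_diff (Q : Set EE) (hQ : Q.Finite) :
    IsPreconnected (Metric.ball (0 : EE) 1 \ Q) := by
  classical
  set h : EE ≃ₜ ball (0 : EE) 1 := Homeomorph.unitBall
  set S : EE → EE := fun x => (h x : EE) with hS
  have hScont : Continuous S := continuous_subtype_val.comp h.continuous
  have hSinj : Function.Injective S :=
    Subtype.val_injective.comp h.injective
  have hSrange : Set.range S = ball (0 : EE) 1 := by
    have : Set.range S = Subtype.val '' (Set.range h) := by
      rw [hS, ← Set.range_comp]; rfl
    rw [this, Homeomorph.range_coe, Set.image_univ, Subtype.range_val]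
  have hpre : IsPathConnected ((S ⁻¹' Q)ᶜ) := by
    apply Set.Countable.isPathConnected_compl_of_one_lt_rank rank_euclid_two
    exact (hQ.preimage hSinj.injOn).countable
  have himg : S '' ((S ⁻¹' Q)ᶜ) = ball (0 : EE) 1 \ Q := by
    rw [Set.image_compl_preimage, hSrange]
  rw [← himg]
  exact (hpre.image hScont).isConnected.isPreconnected

theorem preconn_closedBall_diff (Q : Set EE) (hQ : Q.Finite) :
    IsPreconnected (Metric.closedBall (0 : EE) 1 \ Q) := by
  have base := preconn_ball_diff Q hQ
  apply base.subset_closure (Set.diff_subset_diff_left ball_subset_closedBall)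
  intro x hx
  rw [_root_.mem_closure_iff]
  intro U hU hxU
  have hxb : x ∈ closure (ball (0 : EE) 1) := by
    rw [closure_ball (0 : EE) one_ne_zero]; exact hx.1
  obtain ⟨y, hyU, hyb⟩ := _root_.mem_closure_iff.mp hxb U hU hxU
  have hopen : IsOpen (U ∩ ball (0 : EE) 1) := hU.inter isOpen_ball
  have hpos : 0 < MeasureTheory.volume (U ∩ ball (0 : EE) 1) :=
    hopen.measure_pos _ ⟨y, hyU, hyb⟩
  by_contra hemp
  rw [Set.not_nonempty_iff_eq_empty] at hemp
  have hsub : U ∩ ball (0 : EE) 1 ⊆ Q := by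
    intro z hz
    by_contra hzQ
    exact absurd hemp (Set.nonempty_iff_ne_empty.mp ⟨z, hz.1, hz.2, hzQ⟩)
  have hmono : MeasureTheory.volume (U ∩ ball (0 : EE) 1) ≤ MeasureTheory.volume Q :=
    MeasureTheory.measure_mono hsub
  rw [hQ.measure_zero MeasureTheory.volume] at hmono
  exact absurd (le_antisymm hmono zero_le) (ne_of_gt hpos)

end Geo

section AuxLemmas

open Filter Topology

lemma SComplex.ext' {K L : SComplex V} (h : K.faces = L.faces) : K = L := by
  cases K; cases L; cases h; rfl

lemma reach_symm {K : SComplex V} {u v : V} (h : Reach K u v) : Reach K v u :=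
  by haveI : Std.Symm (fun a b : V => ({a, b} : Finset V) ∈ K.faces) := ⟨fun a b hab => by rwa [Finset.pair_comm] at hab⟩
     exact (Relation.ReflTransGen.stdSymm (r := fun a b : V => ({a, b} : Finset V) ∈ K.faces)).symm u v h

lemma pair_mem_faces {K : SComplex V} {s : Finset V} (hs : s ∈ K.faces) {u v : V}
    (hu : u ∈ s) (hv : v ∈ s) : ({u, v} : Finset V) ∈ K.faces := by
  refine K.down_closed s hs _ ?_ ⟨u, Finset.mem_insert_self u {v}⟩
  intro x hx
  rcases Finset.mem_insert.mp hx with rfl | hx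
  · exact hu
  · rwa [Finset.mem_singleton.mp hx]

lemma not_reach_of_components_ne {K : SComplex V} {a b : V}
    (hne : componentOf K a ≠ componentOf K b) : ¬ Reach K a b := by
  intro hr
  apply hne
  apply SComplex.ext'
  ext t
  simp only [componentOf, Set.mem_setOf_eq]
  constructor
  · rintro ⟨ht, hall⟩
    exact ⟨ht, fun u hu => Relation.ReflTransGen.trans (reach_symm hr) (hall u hu)⟩
  · rintro ⟨ht, hall⟩
    exact ⟨ht, fun u hu => Relation.ReflTransGen.trans hr (hall u hu)⟩

/-- The vertex point of `w` in the realization. -/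
def delta (w : V) : V → ℝ := fun v => if v = w then 1 else 0

lemma delta_self (w : V) : delta w w = 1 := by simp [delta]

lemma delta_ne {w v : V} (h : v ≠ w) : delta w v = 0 := by simp [delta, h]

lemma delta_mem {K : SComplex V} {w : V} (hw : ({w} : Finset V) ∈ K.faces) :
    delta w ∈ geomRealization K := by
  refine ⟨{w}, hw, ?_, ?_, ?_⟩
  · intro v; dsimp [delta]; split <;> norm_num
  · intro v hv
    exact delta_ne (fun h => hv (h ▸ Finset.mem_singleton_self w))
  · simp [delta]

lemma delta_inj {w w' : V} (h : delta w = delta w') : w = w' := by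
  by_contra hne
  have := congrFun h w
  rw [delta_self, delta_ne hne] at this
  norm_num at this

lemma exists_pos_of_mem {K : SComplex V} {f : V → ℝ} (hf : f ∈ geomRealization K) :
    ∃ v, 0 < f v := by
  obtain ⟨s, _, hpos, _, hsum⟩ := hf
  by_contra h
  push_neg at h
  have : ∀ v ∈ s, f v = 0 := fun v _ => le_antisymm (h v) (hpos v)
  rw [Finset.sum_congr rfl this, Finset.sum_const, smul_zero] at hsum
  norm_num at hsum

lemma eq_delta_of_unique_pos {K : SComplex V} {f : V → ℝ} (hf : f ∈ geomRealization K)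
    {w : V} (hw : 0 < f w) (huniq : ∀ v, v ≠ w → ¬ 0 < f v) : f = delta w := by
  obtain ⟨s, _, hpos, hzero, hsum⟩ := hf
  have hz : ∀ v, v ≠ w → f v = 0 := fun v hv => le_antisymm (not_lt.mp (huniq v hv)) (hpos v)
  have hws : w ∈ s := by
    by_contra hws
    exact absurd (hzero w hws) (ne_of_gt hw)
  have : f w = 1 := by
    rw [← hsum, Finset.sum_eq_single_of_mem w hws]
    intro v _ hv; exact hz v hv
  funext v
  by_cases hvw : v = w
  · rw [hvw, delta_self, this]
  · rw [delta_ne hvw, hz v hvw]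

lemma exists_facet_of_compact (K : SComplex V) (hc : IsCompact (geomRealization K)) :
    ∀ s ∈ K.faces, ∃ F, F ∈ facets K ∧ s ⊆ F := by
  intro s hs
  by_contra hno
  push_neg at hno
  have step : ∀ t : {t : Finset V // t ∈ K.faces ∧ s ⊆ t},
      ∃ u : {t : Finset V // t ∈ K.faces ∧ s ⊆ t}, t.1 ⊂ u.1 := by
    rintro ⟨t, ht, hst⟩
    have hnf : ∃ u ∈ K.faces, t ⊆ u ∧ t ≠ u := by
      by_contra h
      push_neg at h
      exact hno t ⟨ht, h⟩ hst
    obtain ⟨u, hu, htu, hne⟩ := hnf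
    exact ⟨⟨u, hu, hst.trans htu⟩, ssubset_of_subset_of_ne htu hne⟩
  choose next hnext using step
  let seq : ℕ → {t : Finset V // t ∈ K.faces ∧ s ⊆ t} :=
    fun n => next^[n] ⟨s, hs, subset_rfl⟩
  have hseq_succ : ∀ n, seq (n + 1) = next (seq n) := by
    intro n
    exact Function.iterate_succ_apply' next n _
  have hcard : ∀ n, n + 1 ≤ (seq n).1.card := by
    intro n
    induction n with
    | zero =>
        have : (seq 0).1 = s := rfl
        rw [this]
        exact Finset.card_pos.mpr (K.nonempty_mem s hs)
    | succ n ih =>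
        have hlt : (seq n).1.card < (seq (n + 1)).1.card := by
          rw [hseq_succ n]
          exact Finset.card_lt_card (hnext (seq n))
        omega
  set b : ℕ → V → ℝ := fun n v => if v ∈ (seq n).1 then ((seq n).1.card : ℝ)⁻¹ else 0 with hb
  have hcardpos : ∀ n, (0 : ℝ) < ((seq n).1.card : ℝ) := by
    intro n
    have := hcard n
    exact_mod_cast (by omega : 0 < (seq n).1.card)
  have hbX : ∀ n, b n ∈ geomRealization K := by
    intro n
    refine ⟨(seq n).1, (seq n).2.1, ?_, ?_, ?_⟩
    · intro v; dsimp [b]; split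
      · exact inv_nonneg.mpr (Nat.cast_nonneg _)
      · exact le_rfl
    · intro v hv; simp [b, hv]
    · have heq : ∀ v ∈ (seq n).1, b n v = ((seq n).1.card : ℝ)⁻¹ := fun v hv => by
        simp [b, hv]
      rw [Finset.sum_congr rfl heq, Finset.sum_const, nsmul_eq_mul]
      exact mul_inv_cancel₀ (ne_of_gt (hcardpos n))
  have hle : Filter.map b Filter.atTop ≤ Filter.principal (geomRealization K) := by
    rw [Filter.le_principal_iff, Filter.mem_map]
    exact Filter.Eventually.of_forall hbX
  obtain ⟨x, hxX, hcl⟩ := hc.exists_clusterPt hle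
  have hx0 : ∀ v, x v = 0 := by
    intro v
    have hcv : ClusterPt (x v) (Filter.map (fun g : V → ℝ => g v) (Filter.map b Filter.atTop)) :=
      hcl.map (continuous_apply v).continuousAt Filter.tendsto_map
    rw [Filter.map_map] at hcv
    have hT : Filter.Tendsto (fun n => b n v) Filter.atTop (𝓝 (0 : ℝ)) := by
      apply squeeze_zero (g := fun n : ℕ => 1 / ((n : ℝ) + 1))
          (fun n => ?_) (fun n => ?_) tendsto_one_div_add_atTop_nhds_zero_nat
      · dsimp [b]; split
        · exact inv_nonneg.mpr (Nat.cast_nonneg _)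
        · exact le_rfl
      · dsimp [b]; split
        · rw [one_div]
          apply inv_anti₀ (by positivity)
          exact_mod_cast hcard n
        · positivity
    exact eq_of_nhds_neBot (hcv.mono hT)
  obtain ⟨s', _, _, _, hsum⟩ := hxX
  rw [Finset.sum_congr rfl (fun v _ => hx0 v), Finset.sum_const, smul_zero] at hsum
  norm_num at hsum

lemma finite_deltas (K : SComplex V) (hc : IsCompact (geomRealization K)) (W : Set V)
    (hWf : ∀ w ∈ W, ({w} : Finset V) ∈ K.faces) :
    {g : V → ℝ | ∃ w ∈ W, g = delta w}.Finite := by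
  classical
  set O : Set (V → ℝ) :=
    {g | (∃ v₁ v₂, v₁ ≠ v₂ ∧ 0 < g v₁ ∧ 0 < g v₂) ∨ ∃ v, v ∉ W ∧ (1:ℝ)/2 < g v} with hO
  have hOopen : IsOpen O := by
    have h1 : O = (⋃ (v₁ : V) (v₂ : V) (_ : v₁ ≠ v₂),
        ((fun g : V → ℝ => g v₁) ⁻¹' Set.Ioi 0 ∩ (fun g : V → ℝ => g v₂) ⁻¹' Set.Ioi 0)) ∪
        ⋃ (v : V) (_ : v ∉ W), (fun g : V → ℝ => g v) ⁻¹' Set.Ioi ((1:ℝ)/2) := by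
      ext g
      simp only [hO, Set.mem_setOf_eq, Set.mem_union, Set.mem_iUnion, Set.mem_inter_iff,
        Set.mem_preimage, Set.mem_Ioi]
      constructor
      · rintro (⟨v₁, v₂, hne, h1, h2⟩ | ⟨v, hv, hgt⟩)
        · exact Or.inl ⟨v₁, v₂, hne, h1, h2⟩
        · exact Or.inr ⟨v, hv, hgt⟩
      · rintro (⟨v₁, v₂, hne, h1, h2⟩ | ⟨v, hv, hgt⟩)
        · exact Or.inl ⟨v₁, v₂, hne, h1, h2⟩
        · exact Or.inr ⟨v, hv, hgt⟩
    rw [h1]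
    apply IsOpen.union
    · apply isOpen_iUnion; intro v₁; apply isOpen_iUnion; intro v₂; apply isOpen_iUnion; intro _
      exact ((isOpen_Ioi.preimage (continuous_apply v₁)).inter
        (isOpen_Ioi.preimage (continuous_apply v₂)))
    · apply isOpen_iUnion; intro v; apply isOpen_iUnion; intro _
      exact isOpen_Ioi.preimage (continuous_apply v)
  set U : V → Set (V → ℝ) := fun w => O ∪ {g | w ∈ W ∧ (1:ℝ)/2 < g w} with hU
  have hUopen : ∀ w, IsOpen (U w) := by
    intro w
    by_cases hw : w ∈ W
    · have : U w = O ∪ (fun g : V → ℝ => g w) ⁻¹' Set.Ioi ((1:ℝ)/2) := by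
        ext g; simp [hU, hw, Set.mem_preimage]
      rw [this]
      exact hOopen.union (isOpen_Ioi.preimage (continuous_apply w))
    · have : U w = O := by
        ext g; simp [hU, hw]
      rw [this]; exact hOopen
  have hcover : geomRealization K ⊆ ⋃ w, U w := by
    intro f hf
    obtain ⟨v, hv⟩ := exists_pos_of_mem hf
    by_cases h2 : ∃ v', v' ≠ v ∧ 0 < f v'
    · obtain ⟨v', hv', hpos⟩ := h2
      refine Set.mem_iUnion.mpr ⟨v, Or.inl ?_⟩
      exact Or.inl ⟨v', v, hv', hpos, hv⟩
    · push_neg at h2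
      have hfd : f = delta v := eq_delta_of_unique_pos hf hv (fun v' hv' => not_lt.mpr (h2 v' hv'))
      by_cases hvW : v ∈ W
      · refine Set.mem_iUnion.mpr ⟨v, Or.inr ⟨hvW, ?_⟩⟩
        rw [hfd, delta_self]; norm_num
      · refine Set.mem_iUnion.mpr ⟨v, Or.inl (Or.inr ⟨v, hvW, ?_⟩)⟩
        rw [hfd, delta_self]; norm_num
  obtain ⟨T, hT⟩ := hc.elim_finite_subcover U hUopen hcover
  apply Set.Finite.subset (T.finite_toSet.image delta)
  rintro g ⟨w, hwW, rfl⟩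
  have hgX : delta w ∈ geomRealization K := delta_mem (hWf w hwW)
  obtain ⟨w', hw'T, hgU⟩ := Set.mem_iUnion₂.mp (hT hgX)
  have hgO : delta w ∉ O := by
    intro hgO
    rcases hgO with ⟨v₁, v₂, hne, h1, h2⟩ | ⟨v, hvW, hv⟩
    · have hv₁ : v₁ = w := by
        by_contra h; rw [delta_ne h] at h1; exact lt_irrefl 0 h1
      have hv₂ : v₂ = w := by
        by_contra h; rw [delta_ne h] at h2; exact lt_irrefl 0 h2
      exact hne (hv₁.trans hv₂.symm)
    · have hvw : v = w := by
        by_contra h; rw [delta_ne h] at hv; norm_num at hv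
      exact hvW (hvw ▸ hwW)
  rcases hgU with hgU | ⟨_, hgt⟩
  · exact absurd hgU hgO
  · have : w' = w := by
      by_contra h
      rw [delta_ne h] at hgt
      norm_num at hgt
    exact Set.mem_image_of_mem delta (this ▸ hw'T)

end AuxLemmas


lemma isOpen_side (R : V → Prop) (Pr : V → V → Prop) :
    IsOpen {g : V → ℝ | (∃ u, R u ∧ 0 < g u) ∨ ∃ w₁ w₂, Pr w₁ w₂ ∧ 0 < g w₁ ∧ 0 < g w₂} := by
  have h1 : {g : V → ℝ | (∃ u, R u ∧ 0 < g u) ∨ ∃ w₁ w₂, Pr w₁ w₂ ∧ 0 < g w₁ ∧ 0 < g w₂} =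
      (⋃ (u : V) (_ : R u), (fun g : V → ℝ => g u) ⁻¹' Set.Ioi 0) ∪
      ⋃ (w₁ : V) (w₂ : V) (_ : Pr w₁ w₂),
        ((fun g : V → ℝ => g w₁) ⁻¹' Set.Ioi 0 ∩ (fun g : V → ℝ => g w₂) ⁻¹' Set.Ioi 0) := by
    ext g
    simp only [Set.mem_setOf_eq, Set.mem_union, Set.mem_iUnion, Set.mem_inter_iff,
      Set.mem_preimage, Set.mem_Ioi]
    constructor
    · rintro (⟨u, hu, hgu⟩ | ⟨w₁, w₂, hp, h1, h2⟩)
      · exact Or.inl ⟨u, hu, hgu⟩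
      · exact Or.inr ⟨w₁, w₂, hp, h1, h2⟩
    · rintro (⟨u, hu, hgu⟩ | ⟨w₁, w₂, hp, h1, h2⟩)
      · exact Or.inl ⟨u, hu, hgu⟩
      · exact Or.inr ⟨w₁, w₂, hp, h1, h2⟩
  rw [h1]
  apply IsOpen.union
  · apply isOpen_iUnion; intro u; apply isOpen_iUnion; intro _
    exact isOpen_Ioi.preimage (continuous_apply u)
  · apply isOpen_iUnion; intro w₁; apply isOpen_iUnion; intro w₂; apply isOpen_iUnion; intro _
    exact (isOpen_Ioi.preimage (continuous_apply w₁)).inter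
      (isOpen_Ioi.preimage (continuous_apply w₂))

lemma isCompact_real_of_ball {d : ℕ} {K : SComplex V} (hK : IsBall d K) :
    IsCompact (geomRealization K) := by
  obtain ⟨Φ⟩ := hK
  haveI : CompactSpace (Metric.closedBall (0 : EuclideanSpace ℝ (Fin d)) 1) :=
    isCompact_iff_compactSpace.mp (isCompact_closedBall _ _)
  exact isCompact_iff_compactSpace.mpr Φ.symm.compactSpace

lemma preconn_diff {K : SComplex V} (hK : IsBall 2 K) {P : Set (V → ℝ)} (hP : P.Finite) :
    IsPreconnected (geomRealization K \ P) := by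
  obtain ⟨Φ⟩ := hK
  have hPX : (Subtype.val ⁻¹' P : Set (geomRealization K)).Finite :=
    hP.preimage Subtype.val_injective.injOn
  set T0 : Set (Metric.closedBall (0 : EuclideanSpace ℝ (Fin 2)) 1) :=
    Φ '' (Subtype.val ⁻¹' P) with hT0
  set Q : Set (EuclideanSpace ℝ (Fin 2)) := Subtype.val '' T0 with hQdef
  have hQ : Q.Finite := (hPX.image _).image _
  have hbase : IsPreconnected (Metric.closedBall (0 : EuclideanSpace ℝ (Fin 2)) 1 \ Q) :=
    preconn_closedBall_diff Q hQ
  have h1 : Subtype.val '' ((Set.univ : Set (Metric.closedBall (0 : EuclideanSpace ℝ (Fin 2)) 1)) \ T0) =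
      Metric.closedBall (0 : EuclideanSpace ℝ (Fin 2)) 1 \ Q := by
    rw [Set.image_diff Subtype.val_injective, Set.image_univ, Subtype.range_val]
  have h2 : IsPreconnected
      ((Set.univ : Set (Metric.closedBall (0 : EuclideanSpace ℝ (Fin 2)) 1)) \ T0) := by
    rw [← Topology.IsInducing.subtypeVal.isPreconnected_image, h1]
    exact hbase
  have h3 : IsPreconnected (Φ.symm '' (Set.univ \ T0)) :=
    h2.image _ Φ.symm.continuous.continuousOn
  have him : ⇑Φ.symm '' T0 = Subtype.val ⁻¹' P := by
    rw [hT0, Set.image_image]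
    simp
  have h4 : Φ.symm '' (Set.univ \ T0) =
      (Set.univ : Set (geomRealization K)) \ (Subtype.val ⁻¹' P) := by
    rw [Set.image_diff Φ.symm.injective, Set.image_univ, him, Φ.symm.surjective.range_eq]
  rw [h4] at h3
  have h5 : IsPreconnected
      (Subtype.val '' ((Set.univ : Set (geomRealization K)) \ (Subtype.val ⁻¹' P))) :=
    h3.image _ continuous_subtype_val.continuousOn
  have h6 : Subtype.val '' ((Set.univ : Set (geomRealization K)) \ (Subtype.val ⁻¹' P)) =
      geomRealization K \ P := by
    rw [Set.image_diff Subtype.val_injective, Set.image_univ, Subtype.range_val,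
      Set.image_preimage_eq_inter_range, Subtype.range_val]
    ext x
    simp only [Set.mem_diff, Set.mem_inter_iff]
    tauto
  rwa [h6] at h5

/-- Lemma 2.2: if the maximal subcomplex `I` on `V \ W` has more than one component, then
there is an edge of `D` not in `∂D` with both endpoints in `W`. -/
theorem exists_interior_edge_of_disconnected (D : SComplex V) (hD : IsBall 2 D) (W : Set V)
    (hW : ∀ w ∈ W, {w} ∈ (boundaryC 2 D).faces)
    (I : SComplex V) (hI : I = fullSub D (vertexSet D \ W))
    (hmulti : ∃ C₁ C₂, IsComponentOf I C₁ ∧ IsComponentOf I C₂ ∧ C₁ ≠ C₂) :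
    ∃ e ∈ D.faces, e.card = 2 ∧ e ∉ (boundaryC 2 D).faces ∧ ∀ v ∈ e, v ∈ W := by
  classical
  subst hI
  set J := fullSub D (vertexSet D \ W) with hJ
  by_contra hgoal
  push_neg at hgoal
  -- basic consequences
  have hXc : IsCompact (geomRealization D) := isCompact_real_of_ball hD
  have hfacet := exists_facet_of_compact D hXc
  have hWface : ∀ w ∈ W, ({w} : Finset V) ∈ D.faces := by
    intro w hw
    obtain ⟨hne, s, hs, hsub, -⟩ := hW w hw
    exact D.down_closed s hs {w} hsub hne
  -- unique facet above every W-W edge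
  have hbd : ∀ w₁ w₂, w₁ ∈ W → w₂ ∈ W → w₁ ≠ w₂ → ({w₁, w₂} : Finset V) ∈ D.faces →
      ∃! F, F ∈ facets D ∧ ({w₁, w₂} : Finset V) ⊆ F := by
    intro w₁ w₂ h1 h2 hne hf
    have hcard : ({w₁, w₂} : Finset V).card = 2 := Finset.card_pair hne
    by_cases hb : ({w₁, w₂} : Finset V) ∈ (boundaryC 2 D).faces
    · obtain ⟨-, s, hs, hsub, hscard, hF⟩ := hb
      have hEq : ({w₁, w₂} : Finset V) = s :=
        Finset.eq_of_subset_of_card_le hsub (by omega)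
      rwa [hEq]
    · obtain ⟨v, hv, hvW⟩ := hgoal _ hf hcard hb
      rcases Finset.mem_insert.mp hv with rfl | hv
      · exact (hvW h1).elim
      · rw [Finset.mem_singleton.mp hv] at hvW
        exact (hvW h2).elim
  -- every face containing a W-W edge lies in its unique facet
  have hkey : ∀ w₁ w₂, w₁ ∈ W → w₂ ∈ W → w₁ ≠ w₂ →
      ∀ s ∈ D.faces, ({w₁, w₂} : Finset V) ⊆ s →
      ∀ F, F ∈ facets D → ({w₁, w₂} : Finset V) ⊆ F → s ⊆ F := by
    intro w₁ w₂ h1 h2 hne s hs hTs F hFf hTF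
    have hT : ({w₁, w₂} : Finset V) ∈ D.faces :=
      D.down_closed s hs _ hTs ⟨w₁, Finset.mem_insert_self _ _⟩
    obtain ⟨F₀, hF₀, huniq⟩ := hbd w₁ w₂ h1 h2 hne hT
    obtain ⟨Fs, hFsf, hsFs⟩ := hfacet s hs
    have hFs0 : Fs = F₀ := huniq Fs ⟨hFsf, hTs.trans hsFs⟩
    have hF0 : F = F₀ := huniq F ⟨hFf, hTF⟩
    rw [hF0, ← hFs0]
    exact hsFs
  -- edges of D with both endpoints outside W are edges of J
  have hedgeJ : ∀ s ∈ D.faces, ∀ u v : V, u ∈ s → v ∈ s →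
      u ∉ W → v ∉ W → Reach J u v := by
    intro s hs u v hu hv huW hvW
    have hpair : ({u, v} : Finset V) ∈ D.faces := pair_mem_faces hs hu hv
    have huV : u ∈ vertexSet D :=
      D.down_closed _ hpair {u} (Finset.singleton_subset_iff.mpr (Finset.mem_insert_self u _))
        ⟨u, Finset.mem_singleton_self u⟩
    have hvV : v ∈ vertexSet D :=
      D.down_closed _ hpair {v} (Finset.singleton_subset_iff.mpr
        (Finset.mem_insert.mpr (Or.inr (Finset.mem_singleton_self v))))
        ⟨v, Finset.mem_singleton_self v⟩
    have hJm : ({u, v} : Finset V) ∈ J.faces := by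
      refine ⟨hpair, ?_⟩
      intro x hx
      rcases Finset.mem_insert.mp hx with rfl | hx
      · exact ⟨huV, huW⟩
      · rw [Finset.mem_singleton.mp hx]
        exact ⟨hvV, hvW⟩
    exact Relation.ReflTransGen.single hJm
  -- the two vertices in different components
  obtain ⟨C₁, C₂, ⟨a, haJ, rfl⟩, ⟨b, hbJ, rfl⟩, hCne⟩ := hmulti
  have hreach : ¬ Reach J a b := not_reach_of_components_ne hCne
  have haW : a ∉ W := (haJ.2 a (Finset.mem_singleton_self a)).2
  have hbW : b ∉ W := (hbJ.2 b (Finset.mem_singleton_self b)).2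
  have haD : ({a} : Finset V) ∈ D.faces := haJ.1
  have hbD : ({b} : Finset V) ∈ D.faces := hbJ.1
  -- the vertex points over W
  set P : Set (V → ℝ) := {g | ∃ w ∈ W, g = delta w} with hPdef
  have hPfin : P.Finite := finite_deltas D hXc W hWface
  have hPre : IsPreconnected (geomRealization D \ P) := preconn_diff hD hPfin
  -- the side predicates
  set GP : V → V → Prop := fun w₁ w₂ => w₁ ≠ w₂ ∧ w₁ ∈ W ∧ w₂ ∈ W ∧
      ∃ F, (F ∈ facets D ∧ ({w₁, w₂} : Finset V) ⊆ F) ∧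
        ∃ v ∈ F, v ∉ W ∧ Reach J a v with hGPdef
  set BP : V → V → Prop := fun w₁ w₂ => w₁ ≠ w₂ ∧ w₁ ∈ W ∧ w₂ ∈ W ∧
      ∃ F, (F ∈ facets D ∧ ({w₁, w₂} : Finset V) ⊆ F) ∧
        ((∃ v ∈ F, v ∉ W ∧ ¬ Reach J a v) ∨ ∀ v ∈ F, v ∈ W) with hBPdef
  set OA : Set (V → ℝ) := {g | (∃ u, (u ∉ W ∧ Reach J a u) ∧ 0 < g u) ∨
      ∃ w₁ w₂, GP w₁ w₂ ∧ 0 < g w₁ ∧ 0 < g w₂} with hOAdef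
  set OB : Set (V → ℝ) := {g | (∃ u, (u ∉ W ∧ ¬ Reach J a u) ∧ 0 < g u) ∨
      ∃ w₁ w₂, BP w₁ w₂ ∧ 0 < g w₁ ∧ 0 < g w₂} with hOBdef
  have hOAopen : IsOpen OA := isOpen_side _ _
  have hOBopen : IsOpen OB := isOpen_side _ _
  -- cover
  have hcover : geomRealization D \ P ⊆ OA ∪ OB := by
    rintro f ⟨hfX, hfP⟩
    obtain ⟨s₀, hs₀, hpos, hzero, hsum⟩ := hfX
    have hmem : ∀ {u : V}, 0 < f u → u ∈ s₀ := by
      intro u hu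
      by_contra hus
      rw [hzero u hus] at hu
      exact lt_irrefl 0 hu
    by_cases hnonW : ∃ u, 0 < f u ∧ u ∉ W
    · obtain ⟨u, hfu, huW⟩ := hnonW
      by_cases hr : Reach J a u
      · exact Or.inl (Or.inl ⟨u, ⟨huW, hr⟩, hfu⟩)
      · exact Or.inr (Or.inl ⟨u, ⟨huW, hr⟩, hfu⟩)
    · push_neg at hnonW
      obtain ⟨v, hv⟩ := exists_pos_of_mem ⟨s₀, hs₀, hpos, hzero, hsum⟩
      by_cases h2 : ∃ v', v' ≠ v ∧ 0 < f v'
      · obtain ⟨v', hne', hv'⟩ := h2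
        have hvW : v ∈ W := hnonW v hv
        have hv'W : v' ∈ W := hnonW v' hv'
        have hT : ({v', v} : Finset V) ∈ D.faces := by
          have := pair_mem_faces hs₀ (hmem hv') (hmem hv)
          exact this
        obtain ⟨F₀, ⟨hF₀f, hTF₀⟩, -⟩ := hbd v' v hv'W hvW hne' hT
        by_cases hFW : ∃ x ∈ F₀, x ∉ W
        · obtain ⟨x, hxF, hxW⟩ := hFW
          by_cases hr : Reach J a x
          · exact Or.inl (Or.inr ⟨v', v, ⟨hne', hv'W, hvW, F₀, ⟨hF₀f, hTF₀⟩, x, hxF, hxW, hr⟩,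
              hv', hv⟩)
          · exact Or.inr (Or.inr ⟨v', v, ⟨hne', hv'W, hvW, F₀, ⟨hF₀f, hTF₀⟩,
              Or.inl ⟨x, hxF, hxW, hr⟩⟩, hv', hv⟩)
        · push_neg at hFW
          exact Or.inr (Or.inr ⟨v', v, ⟨hne', hv'W, hvW, F₀, ⟨hF₀f, hTF₀⟩, Or.inr hFW⟩, hv', hv⟩)
      · push_neg at h2
        have hfd : f = delta v :=
          eq_delta_of_unique_pos ⟨s₀, hs₀, hpos, hzero, hsum⟩ hv
            (fun v' hv' => not_lt.mpr (h2 v' hv'))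
        exact absurd ⟨v, hnonW v hv, hfd⟩ hfP
  -- endpoints
  have hain : delta a ∈ (geomRealization D \ P) ∩ OA := by
    refine ⟨⟨delta_mem haD, ?_⟩, Or.inl ⟨a, ⟨haW, Relation.ReflTransGen.refl⟩, ?_⟩⟩
    · rintro ⟨w, hwW, heq⟩
      exact haW ((delta_inj heq) ▸ hwW)
    · rw [delta_self]; norm_num
  have hbin : delta b ∈ (geomRealization D \ P) ∩ OB := by
    refine ⟨⟨delta_mem hbD, ?_⟩, Or.inl ⟨b, ⟨hbW, hreach⟩, ?_⟩⟩
    · rintro ⟨w, hwW, heq⟩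
      exact hbW ((delta_inj heq) ▸ hwW)
    · rw [delta_self]; norm_num
  -- intersection is empty: contradiction
  obtain ⟨g, ⟨hgX, hgP⟩, hgOA, hgOB⟩ :=
    hPre OA OB hOAopen hOBopen hcover ⟨delta a, hain.1, hain.2⟩ ⟨delta b, hbin.1, hbin.2⟩
  obtain ⟨sg, hsg, hgpos, hgzero, hgsum⟩ := hgX
  have hgmem : ∀ {u : V}, 0 < g u → u ∈ sg := by
    intro u hu
    by_contra hus
    rw [hgzero u hus] at hu
    exact lt_irrefl 0 hu
  -- reach transfer inside a common face
  have htrans : ∀ s ∈ D.faces, ∀ u v : V, u ∈ s → v ∈ s → u ∉ W → v ∉ W →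
      Reach J a u → ¬ Reach J a v → False := by
    intro s hs u v hu hv huW hvW hru hrv
    exact hrv (Relation.ReflTransGen.trans hru (hedgeJ s hs u v hu hv huW hvW))
  rcases hgOA with ⟨u, ⟨huW, hur⟩, hgu⟩ | ⟨w₁, w₂, ⟨hne, h1W, h2W, F, ⟨hFf, hTF⟩, hFgood⟩, hgw₁, hgw₂⟩
  · rcases hgOB with ⟨u', ⟨hu'W, hu'r⟩, hgu'⟩ | ⟨w₁', w₂', ⟨hne', h1W', h2W', F', ⟨hF'f, hTF'⟩, hF'side⟩, hgw₁', hgw₂'⟩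
    · exact htrans sg hsg u u' (hgmem hgu) (hgmem hgu') huW hu'W hur hu'r
    · -- u reachable, BP pair
      have hTs : ({w₁', w₂'} : Finset V) ⊆ sg :=
        Finset.insert_subset (hgmem hgw₁') (Finset.singleton_subset_iff.mpr (hgmem hgw₂'))
      have hsgF : sg ⊆ F' := hkey w₁' w₂' h1W' h2W' hne' sg hsg hTs F' hF'f hTF'
      have huF : u ∈ F' := hsgF (hgmem hgu)
      rcases hF'side with ⟨v', hv'F, hv'W, hv'r⟩ | hallW
      · exact htrans F' hF'f.1 u v' huF hv'F huW hv'W hur hv'r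
      · exact huW (hallW u huF)
  · rcases hgOB with ⟨u', ⟨hu'W, hu'r⟩, hgu'⟩ | ⟨w₁', w₂', ⟨hne', h1W', h2W', F', ⟨hF'f, hTF'⟩, hF'side⟩, hgw₁', hgw₂'⟩
    · -- GP pair, u' unreachable
      have hTs : ({w₁, w₂} : Finset V) ⊆ sg :=
        Finset.insert_subset (hgmem hgw₁) (Finset.singleton_subset_iff.mpr (hgmem hgw₂))
      have hsgF : sg ⊆ F := hkey w₁ w₂ h1W h2W hne sg hsg hTs F hFf hTF
      obtain ⟨v, hvF, hvW, hvr⟩ := hFgood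
      exact htrans F hFf.1 v u' hvF (hsgF (hgmem hgu')) hvW hu'W hvr hu'r
    · -- two pairs
      have hTs : ({w₁, w₂} : Finset V) ⊆ sg :=
        Finset.insert_subset (hgmem hgw₁) (Finset.singleton_subset_iff.mpr (hgmem hgw₂))
      have hTs' : ({w₁', w₂'} : Finset V) ⊆ sg :=
        Finset.insert_subset (hgmem hgw₁') (Finset.singleton_subset_iff.mpr (hgmem hgw₂'))
      have hsgF : sg ⊆ F := hkey w₁ w₂ h1W h2W hne sg hsg hTs F hFf hTF
      have hsgF' : sg ⊆ F' := hkey w₁' w₂' h1W' h2W' hne' sg hsg hTs' F' hF'f hTF'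
      have hFF' : F ⊆ F' := hkey w₁' w₂' h1W' h2W' hne' F hFf.1 (hTs'.trans hsgF) F' hF'f hTF'
      have hF'F : F' ⊆ F := hkey w₁ w₂ h1W h2W hne F' hF'f.1 (hTs.trans hsgF') F hFf hTF
      have hFeq : F = F' := Finset.Subset.antisymm hFF' hF'F
      obtain ⟨v, hvF, hvW, hvr⟩ := hFgood
      rcases hF'side with ⟨v', hv'F, hv'W, hv'r⟩ | hallW
      · exact htrans F hFf.1 v v' hvF (hFeq ▸ hv'F) hvW hv'W hvr hv'r
      · exact hvW (hallW v (hFeq ▸ hvF))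
end SCPaper
end
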